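/- arXiv:1404.1860 — 3 statements merged into one kernel-verified Lean document; each statement's English description precedes it below -/
import Mathlib

section
/- Let $n,m$ be nonnegative integers and $x$ a real (or formal) variable. If $0\le m\le n$ then $\sum_{j=0}^{n}\frac{(-n)_j}{j!}(-j)_m (x+j)_m = (-1)^m \frac{(x)_{2m}}{(x)_n}(-n)_m(-m)_{n-m}$, where $(a)_k$ denotes the Pochhammer symbol (rising factorial). If $m>n$, the left-hand sum equals zero. -/
open Finset Polynomial

lemma asc_add_eval (a b : ℕ) (x : ℝ) :
    (ascPochhammer ℝ (a + b)).eval x =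
      (ascPochhammer ℝ a).eval x * (ascPochhammer ℝ b).eval (x + a) := by
  rw [← ascPochhammer_mul, eval_mul, eval_comp]
  simp

lemma asc_negzero (k a : ℕ) (h : a < k) :
    (ascPochhammer ℝ k).eval (-(a : ℝ)) = 0 := by
  induction k with
  | zero => omega
  | succ k ih =>
    rw [ascPochhammer_succ_eval]
    rcases Nat.lt_or_ge a k with h' | h'
    · rw [ih h', zero_mul]
    · have : a = k := by omega
      subst this; simp

lemma asc_negeval (k a : ℕ) (h : k ≤ a) :
    ((a - k).factorial : ℝ) * (ascPochhammer ℝ k).eval (-(a : ℝ))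
      = (-1) ^ k * a.factorial := by
  induction k with
  | zero => simp
  | succ k ih =>
    have hk : k ≤ a := by omega
    have hne : ((a : ℝ) - k) ≠ 0 := by
      have : (k : ℝ) < a := by exact_mod_cast (by omega : k < a)
      intro hc; nlinarith
    have key : ((a : ℝ) - k) * (((a - (k+1)).factorial : ℝ) *
        (ascPochhammer ℝ (k+1)).eval (-(a : ℝ)))
        = ((a : ℝ) - k) * ((-1) ^ (k+1) * a.factorial) := by
      have hfac : (a - k).factorial = (a - k) * (a - (k+1)).factorial := by
        have : a - k = (a - (k+1)) + 1 := by omega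
        rw [this, Nat.factorial_succ]
      have hcast : ((a - k : ℕ) : ℝ) = (a : ℝ) - k := by
        push_cast [Nat.cast_sub hk]; ring
      rw [ascPochhammer_succ_eval]
      have := ih hk
      rw [hfac] at this
      push_cast at this ⊢
      rw [hcast] at this
      linear_combination ((k : ℝ) - a) * this
    exact mul_left_cancel₀ hne key

lemma asc_negeval' (k a : ℕ) (h : k ≤ a) :
    (ascPochhammer ℝ k).eval (-(a : ℝ))
      = (-1) ^ k * a.factorial / (a - k).factorial := by
  rw [eq_div_iff (by exact_mod_cast (a - k).factorial_ne_zero)]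
  rw [mul_comm]
  exact asc_negeval k a h

lemma chu (N : ℕ) : ∀ b c : ℝ,
    ∑ i ∈ range (N + 1), (-1 : ℝ) ^ i * (N.choose i : ℝ) *
        (ascPochhammer ℝ i).eval b * (ascPochhammer ℝ (N - i)).eval (c + i)
      = (ascPochhammer ℝ N).eval (c - b) := by
  induction N with
  | zero => intro b c; simp
  | succ N ih =>
    intro b c
    rw [Finset.sum_range_succ']
    have step : ∀ i ∈ range (N + 1),
        (-1 : ℝ) ^ (i+1) * ((N+1).choose (i+1) : ℝ) *
          (ascPochhammer ℝ (i+1)).eval b * (ascPochhammer ℝ (N+1-(i+1))).eval (c + ((i+1 : ℕ) : ℝ))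
        = (-b) * ((-1 : ℝ) ^ i * (N.choose i : ℝ) * (ascPochhammer ℝ i).eval (b+1) *
              (ascPochhammer ℝ (N - i)).eval ((c+1) + i))
          + (-1 : ℝ) ^ (i+1) * (N.choose (i+1) : ℝ) * (ascPochhammer ℝ (i+1)).eval b *
              (ascPochhammer ℝ (N+1-(i+1))).eval (c + ((i+1 : ℕ) : ℝ)) := by
      intro i hi
      have h1 : N + 1 - (i+1) = N - i := by omega
      have h2 : (ascPochhammer ℝ (i+1)).eval b = b * (ascPochhammer ℝ i).eval (b + 1) := by
        have := asc_add_eval 1 i b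
        rw [show 1 + i = i + 1 from Nat.add_comm 1 i] at this
        simpa using this
      have h3 : c + ((i+1 : ℕ) : ℝ) = (c + 1) + i := by push_cast; ring
      rw [h1, h2, h3, Nat.choose_succ_succ]
      push_cast
      ring
    rw [Finset.sum_congr rfl step, Finset.sum_add_distrib, ← Finset.mul_sum, ih (b+1) (c+1),
      add_sub_add_right_eq_sub]
    have merge : (∑ i ∈ range (N + 1), (-1 : ℝ) ^ (i+1) * (N.choose (i+1) : ℝ) *
          (ascPochhammer ℝ (i+1)).eval b * (ascPochhammer ℝ (N+1-(i+1))).eval (c + ((i+1 : ℕ) : ℝ)))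
        + (-1 : ℝ) ^ 0 * ((N+1).choose 0 : ℝ) * (ascPochhammer ℝ 0).eval b *
            (ascPochhammer ℝ (N+1-0)).eval (c + ((0 : ℕ) : ℝ))
        = (ascPochhammer ℝ N).eval (c - b) * (c + N) := by
      have e0 : (-1 : ℝ) ^ 0 * ((N+1).choose 0 : ℝ) * (ascPochhammer ℝ 0).eval b *
            (ascPochhammer ℝ (N+1-0)).eval (c + ((0 : ℕ) : ℝ))
          = (-1 : ℝ) ^ 0 * (N.choose 0 : ℝ) * (ascPochhammer ℝ 0).eval b *
            (ascPochhammer ℝ (N+1-0)).eval (c + ((0 : ℕ) : ℝ)) := by simp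
      rw [e0, ← Finset.sum_range_succ'
        (fun k => (-1 : ℝ) ^ k * (N.choose k : ℝ) * (ascPochhammer ℝ k).eval b *
          (ascPochhammer ℝ (N+1-k)).eval (c + (k : ℝ))) (N+1)]
      rw [Finset.sum_range_succ]
      simp only [Nat.choose_succ_self, Nat.cast_zero, mul_zero, zero_mul, mul_eq_zero, add_zero]
      have step2 : ∀ k ∈ range (N + 1),
          (-1 : ℝ) ^ k * (N.choose k : ℝ) * (ascPochhammer ℝ k).eval b *
            (ascPochhammer ℝ (N+1-k)).eval (c + (k : ℝ))
          = ((-1 : ℝ) ^ k * (N.choose k : ℝ) * (ascPochhammer ℝ k).eval b *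
              (ascPochhammer ℝ (N-k)).eval (c + k)) * (c + N) := by
        intro k hk
        have hk' : k ≤ N := by simpa [Nat.lt_succ_iff] using hk
        have h1 : N + 1 - k = (N - k) + 1 := by omega
        rw [h1, ascPochhammer_succ_eval]
        have h2 : c + (k : ℝ) + ((N - k : ℕ) : ℝ) = c + N := by
          rw [Nat.cast_sub hk']; ring
        rw [h2]; ring
      rw [Finset.sum_congr rfl step2, ← Finset.sum_mul, ih b c]
    rw [add_assoc, merge, ascPochhammer_succ_eval]
    ring

/-- Pochhammer (rising factorial) sum lemma: for `0 ≤ m ≤ n`,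
`∑_{j=0}^{n} (-n)_j / j! * (-j)_m * (x+j)_m = (-1)^m (x)_{2m} / (x)_n * (-n)_m * (-m)_{n-m}`
(stated multiplied through by `(x)_n`, as a polynomial identity in `x`),
and the sum vanishes when `m > n`. -/
theorem stmt0 (n m : ℕ) (x : ℝ) :
    (m ≤ n →
      (∑ j ∈ Finset.range (n + 1),
          (ascPochhammer ℝ j).eval (-(n : ℝ)) / (j.factorial : ℝ) *
            (ascPochhammer ℝ m).eval (-(j : ℝ)) *
            (ascPochhammer ℝ m).eval (x + (j : ℝ))) * (ascPochhammer ℝ n).eval x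
        = (-1 : ℝ) ^ m * (ascPochhammer ℝ (2 * m)).eval x *
            (ascPochhammer ℝ m).eval (-(n : ℝ)) *
            (ascPochhammer ℝ (n - m)).eval (-(m : ℝ))) ∧
    (n < m →
      (∑ j ∈ Finset.range (n + 1),
          (ascPochhammer ℝ j).eval (-(n : ℝ)) / (j.factorial : ℝ) *
            (ascPochhammer ℝ m).eval (-(j : ℝ)) *
            (ascPochhammer ℝ m).eval (x + (j : ℝ))) = 0) := by
  constructor
  · intro hmn
    set N := n - m with hN
    set f : ℕ → ℝ := fun j =>
      (ascPochhammer ℝ j).eval (-(n : ℝ)) / (j.factorial : ℝ) *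
        (ascPochhammer ℝ m).eval (-(j : ℝ)) *
        (ascPochhammer ℝ m).eval (x + (j : ℝ)) with hf
    have hsplit : ∑ j ∈ Finset.range (n + 1), f j
        = ∑ i ∈ Finset.range (N + 1), f (m + i) := by
      rw [← Finset.sum_range_add_sum_Ico f (show m ≤ n + 1 by omega)]
      have hz : ∑ j ∈ Finset.range m, f j = 0 := by
        apply Finset.sum_eq_zero
        intro j hj
        have : (ascPochhammer ℝ m).eval (-(j : ℝ)) = 0 :=
          asc_negzero m j (Finset.mem_range.mp hj)
        simp [hf, this]
      rw [hz, zero_add, Finset.sum_Ico_eq_sum_range]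
      have hnum : n + 1 - m = N + 1 := by omega
      rw [hnum]
    rw [hsplit, Finset.sum_mul]
    have key : ∀ i ∈ Finset.range (N + 1),
        f (m + i) * (ascPochhammer ℝ n).eval x
        = ((-1 : ℝ) ^ m * (ascPochhammer ℝ (2 * m)).eval x *
            (ascPochhammer ℝ m).eval (-(n : ℝ))) *
          ((-1 : ℝ) ^ i * (N.choose i : ℝ) * (ascPochhammer ℝ i).eval (x + 2 * m) *
            (ascPochhammer ℝ (N - i)).eval ((x + m) + i)) := by
      intro i hi
      have hiN : i ≤ N := by simpa [Nat.lt_succ_iff] using hi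
      have hmi : m + i ≤ n := by omega
      -- factor (-n)_{m+i}
      have hA : (ascPochhammer ℝ (m + i)).eval (-(n : ℝ))
          = (ascPochhammer ℝ m).eval (-(n : ℝ)) * (ascPochhammer ℝ i).eval (-(N : ℝ)) := by
        rw [asc_add_eval m i]
        congr 2
        have : ((N : ℕ) : ℝ) = (n : ℝ) - m := by
          rw [hN, Nat.cast_sub hmn]
        rw [this]; ring
      have he1 : (ascPochhammer ℝ i).eval (-(N : ℝ))
          = (-1) ^ i * N.factorial / (N - i).factorial := asc_negeval' i N hiN
      have he2 : (ascPochhammer ℝ m).eval (-((m + i : ℕ) : ℝ))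
          = (-1) ^ m * (m + i).factorial / (i.factorial : ℝ) := by
        have := asc_negeval' m (m + i) (by omega)
        rwa [show m + i - m = i by omega] at this
      -- factor (x + (m+i))_m * (x)_n
      have hP : (ascPochhammer ℝ m).eval (x + ((m + i : ℕ) : ℝ)) * (ascPochhammer ℝ n).eval x
          = (ascPochhammer ℝ (2 * m)).eval x * (ascPochhammer ℝ i).eval (x + 2 * m) *
            (ascPochhammer ℝ (N - i)).eval ((x + m) + i) := by
        have hn' : n = (m + i) + (N - i) := by omega
        rw [hn', asc_add_eval (m + i) (N - i) x]
        have h2m : (ascPochhammer ℝ (m + i)).eval x * (ascPochhammer ℝ m).eval (x + ((m + i : ℕ) : ℝ))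
            = (ascPochhammer ℝ (2 * m)).eval x * (ascPochhammer ℝ i).eval (x + 2 * m) := by
          rw [← asc_add_eval (m + i) m x, show (m + i) + m = 2 * m + i by ring,
            asc_add_eval (2 * m) i x]
          push_cast; ring_nf
        have hc : x + ((m + i : ℕ) : ℝ) = (x + m) + i := by push_cast; ring
        rw [← hc]
        calc (ascPochhammer ℝ m).eval (x + ((m + i : ℕ) : ℝ)) *
              ((ascPochhammer ℝ (m + i)).eval x *
                (ascPochhammer ℝ (N - i)).eval (x + ((m + i : ℕ) : ℝ)))
            = ((ascPochhammer ℝ (m + i)).eval x *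
                (ascPochhammer ℝ m).eval (x + ((m + i : ℕ) : ℝ))) *
              (ascPochhammer ℝ (N - i)).eval (x + ((m + i : ℕ) : ℝ)) := by ring
          _ = _ := by rw [h2m]
      have hchoose : (N.choose i : ℝ) * (i.factorial : ℝ) * ((N - i).factorial : ℝ)
          = (N.factorial : ℝ) := by
        exact_mod_cast congrArg (Nat.cast : ℕ → ℝ)
          (Nat.choose_mul_factorial_mul_factorial hiN)
      have hfacmi : ((m + i).factorial : ℝ) ≠ 0 := by exact_mod_cast (m + i).factorial_ne_zero
      have hfaci : (i.factorial : ℝ) ≠ 0 := by exact_mod_cast i.factorial_ne_zero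
      have hfacNi : ((N - i).factorial : ℝ) ≠ 0 := by exact_mod_cast (N - i).factorial_ne_zero
      have hC : (N.choose i : ℝ)
          = (N.factorial : ℝ) / ((i.factorial : ℝ) * ((N - i).factorial : ℝ)) := by
        rw [eq_div_iff (mul_ne_zero hfaci hfacNi)]
        linear_combination hchoose
      simp only [hf]
      rw [hA, he1, he2, hC]
      set E := (ascPochhammer ℝ m).eval (-(n : ℝ)) with hE
      set M := (ascPochhammer ℝ m).eval (x + ((m + i : ℕ) : ℝ)) with hM
      set X' := (ascPochhammer ℝ n).eval x with hX
      set P2 := (ascPochhammer ℝ (2 * m)).eval x with hP2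
      set Pi := (ascPochhammer ℝ i).eval (x + 2 * (m : ℝ)) with hPi
      set Pn := (ascPochhammer ℝ (N - i)).eval ((x + (m : ℝ)) + (i : ℝ)) with hPn
      calc E * ((-1 : ℝ) ^ i * N.factorial / (N - i).factorial) / ((m + i).factorial : ℝ) *
            ((-1 : ℝ) ^ m * (m + i).factorial / (i.factorial : ℝ)) * M * X'
          = (E * ((-1 : ℝ) ^ i * N.factorial / (N - i).factorial) / ((m + i).factorial : ℝ) *
              ((-1 : ℝ) ^ m * (m + i).factorial / (i.factorial : ℝ))) * (M * X') := by ring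
        _ = (E * ((-1 : ℝ) ^ i * N.factorial / (N - i).factorial) / ((m + i).factorial : ℝ) *
              ((-1 : ℝ) ^ m * (m + i).factorial / (i.factorial : ℝ))) * (P2 * Pi * Pn) := by
            rw [hP]
        _ = (-1 : ℝ) ^ m * P2 * E *
              ((-1 : ℝ) ^ i * ((N.factorial : ℝ) / ((i.factorial : ℝ) * ((N - i).factorial : ℝ))) *
                Pi * Pn) := by
            field_simp
    rw [Finset.sum_congr rfl key, ← Finset.mul_sum, chu N (x + 2 * m) (x + m),
      show (x + m) - (x + 2 * m) = -(m : ℝ) by ring]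
  · intro hnm
    apply Finset.sum_eq_zero
    intro j hj
    have hjm : j < m := by
      have := Finset.mem_range.mp hj; omega
    rw [asc_negzero m j hjm]
    ring_nf
end

section
/- Let $f$ be a probability density function supported on $[a,b]$ with $a<0<b$, and let $\gamma>0$. Define $M(\gamma)f(x) = \gamma x^{\gamma-1}\int_x^b f(t)t^{-\gamma}\,dt$ for $0<x<b$ and $M(\gamma)f(x)=\gamma|x|^{\gamma-1}\int_a^x f(t)|t|^{-\gamma}\,dt$ for $a<x<0$. Then for every nonnegative integer $n$: $\int_0^b x^n M(\gamma)f(x)\,dx = \frac{\gamma}{\gamma+n}\int_0^b x^n f(x)\,dx$ and $\int_a^0 x^n M(\gamma)f(x)\,dx = \frac{\gamma}{\gamma+n}\int_a^0 x^n f(x)\,dx$; in particular $M(\gamma)f$ is a probability density and its $n$-th moment equals $\frac{\gamma}{\gamma+n}$ times the $n$-th moment of $f$. -/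
open MeasureTheory intervalIntegral Set

/-- The transform `M(γ)f`: `γ x^{γ-1} ∫_x^b f(t) t^{-γ} dt` for `x > 0`,
and `γ |x|^{γ-1} ∫_a^x f(t) |t|^{-γ} dt` for `x ≤ 0`. -/
noncomputable def Mgamma (γ a b : ℝ) (f : ℝ → ℝ) (x : ℝ) : ℝ :=
  if 0 < x then γ * x ^ (γ - 1) * ∫ t in x..b, f t * t ^ (-γ)
  else γ * |x| ^ (γ - 1) * ∫ t in a..x, f t * |t| ^ (-γ)

lemma key (c γ : ℝ) (hc : 0 < c) (hγ : 0 < γ) (n : ℕ) (g : ℝ → ℝ)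
    (hg : IntegrableOn (fun t => g t * t ^ (-γ)) (Set.Ioc 0 c)) :
    IntegrableOn (fun x => x ^ n * (γ * x ^ (γ - 1) * ∫ t in Set.Ioc x c, g t * t ^ (-γ)))
      (Set.Ioc 0 c) ∧
    (∫ x in Set.Ioc 0 c, x ^ n * (γ * x ^ (γ - 1) * ∫ t in Set.Ioc x c, g t * t ^ (-γ)))
      = γ / (γ + n) * ∫ x in Set.Ioc 0 c, x ^ n * g x := by
  set μ : Measure ℝ := volume.restrict (Set.Ioc 0 c) with hμ
  set u : ℝ → ℝ := fun x => γ * x ^ (γ + n - 1) with hu_def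
  set v : ℝ → ℝ := fun t => g t * t ^ (-γ) with hv_def
  set F : ℝ × ℝ → ℝ := fun p => {q : ℝ × ℝ | q.1 < q.2}.indicator (fun q => u q.1 * v q.2) p
    with hF_def
  have hγn : (0:ℝ) < γ + n := by positivity
  have hu_int : Integrable u μ := by
    have : IntervalIntegrable (fun x : ℝ => x ^ (γ + n - 1)) volume 0 c :=
      intervalIntegrable_rpow' (by linarith)
    rw [intervalIntegrable_iff_integrableOn_Ioc_of_le hc.le] at this
    exact (this.const_mul γ)
  have hv_int : Integrable v μ := hg
  have hF_meas : AEStronglyMeasurable F (μ.prod μ) := by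
    apply AEStronglyMeasurable.indicator
    · exact (hu_int.mul_prod hv_int).aestronglyMeasurable
    · exact measurableSet_lt measurable_fst measurable_snd
  have hF_int : Integrable F (μ.prod μ) := by
    refine (hu_int.mul_prod hv_int).norm.mono' hF_meas ?_
    refine Filter.Eventually.of_forall fun p => ?_
    exact (norm_indicator_le_norm_self _ _).trans le_rfl
  -- hinner integral in t
  have h1 : ∀ x ∈ Set.Ioc 0 c,
      (∫ t, F (x, t) ∂μ) = x ^ n * (γ * x ^ (γ - 1) * ∫ t in Set.Ioc x c, g t * t ^ (-γ)) := by
    intro x hx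
    have e1 : (fun t => F (x, t)) = (Set.Ioi x).indicator (fun t => u x * v t) := by
      funext t
      by_cases h : x < t <;> simp [hF_def, Set.indicator, h]
    rw [e1, hμ, setIntegral_indicator measurableSet_Ioi]
    have e2 : Set.Ioc 0 c ∩ Set.Ioi x = Set.Ioc x c := by
      ext t
      constructor
      · rintro ⟨⟨_, h2⟩, h3⟩; exact ⟨h3, h2⟩
      · rintro ⟨h1', h2⟩; exact ⟨⟨hx.1.trans h1', h2⟩, h1'⟩
    rw [e2, MeasureTheory.integral_const_mul]
    have e3 : u x = x ^ n * (γ * x ^ (γ - 1)) := by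
      have : x ^ (γ + (n:ℝ) - 1) = x ^ (γ - 1) * x ^ (n:ℝ) := by
        rw [← Real.rpow_add hx.1]; ring_nf
      rw [hu_def]
      simp only [this, ← Real.rpow_natCast x n]
      ring
    rw [e3, hv_def]
    ring
  -- hinner integral in x
  have h2 : ∀ t ∈ Set.Ioc 0 c,
      (∫ x, F (x, t) ∂μ) = γ / (γ + n) * (t ^ n * g t) := by
    intro t ht
    have e1 : (fun x => F (x, t)) = (Set.Iio t).indicator (fun x => u x * v t) := by
      funext x
      by_cases h : x < t <;> simp [hF_def, Set.indicator, h]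
    rw [e1, hμ, setIntegral_indicator measurableSet_Iio]
    have e2 : Set.Ioc 0 c ∩ Set.Iio t = Set.Ioo 0 t := by
      ext x
      constructor
      · rintro ⟨⟨h1', _⟩, h3⟩; exact ⟨h1', h3⟩
      · rintro ⟨h1', h2'⟩; exact ⟨⟨h1', (le_of_lt h2').trans ht.2⟩, h2'⟩
    have e3 : (∫ x in Set.Ioo 0 t, u x) = γ * (t ^ (γ + n) / (γ + n)) := by
      rw [hu_def]
      rw [MeasureTheory.integral_const_mul]
      have : (∫ x in Set.Ioo 0 t, x ^ (γ + ↑n - 1)) = ∫ x in (0:ℝ)..t, x ^ (γ + ↑n - 1) := by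
        rw [intervalIntegral.integral_of_le ht.1.le, integral_Ioc_eq_integral_Ioo]
      rw [this, integral_rpow (Or.inl (by linarith))]
      rw [Real.zero_rpow (by linarith)]
      ring_nf
    have e4 : ∀ x, u x * v t = v t * u x := fun x => mul_comm _ _
    simp only [e4]
    rw [e2, MeasureTheory.integral_const_mul, e3, hv_def]
    have e5 : t ^ (-γ) * (γ * (t ^ (γ + ↑n) / (γ + ↑n))) = γ / (γ + n) * t ^ n := by
      have h' : t ^ (γ + (n:ℝ)) * t ^ (-γ) = t ^ (n:ℝ) := by
        rw [← Real.rpow_add ht.1]; ring_nf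
      field_simp
      rw [mul_comm (t ^ (-γ))]
      rw [h', Real.rpow_natCast]
    rw [mul_assoc, e5]
    ring
  have swap := integral_integral_swap (f := fun x t => F (x, t)) hF_int
  constructor
  · refine (hF_int.integral_prod_left).congr ?_
    rw [hμ]
    exact (ae_restrict_iff' measurableSet_Ioc).mpr (Filter.Eventually.of_forall h1)
  · calc (∫ x in Set.Ioc 0 c, x ^ n * (γ * x ^ (γ - 1) * ∫ t in Set.Ioc x c, g t * t ^ (-γ)))
        = ∫ x, (∫ t, F (x, t) ∂μ) ∂μ := by
          rw [hμ]
          exact (setIntegral_congr_fun measurableSet_Ioc h1).symm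
      _ = ∫ t, (∫ x, F (x, t) ∂μ) ∂μ := swap
      _ = ∫ t in Set.Ioc 0 c, γ / (γ + n) * (t ^ n * g t) := by
          rw [hμ]
          exact setIntegral_congr_fun measurableSet_Ioc h2
      _ = γ / (γ + n) * ∫ x in Set.Ioc 0 c, x ^ n * g x := MeasureTheory.integral_const_mul _ _

/-- If `f` is a probability density on `[a,b]` with `a < 0 < b`, `γ > 0`, and
`f(t)|t|^{-γ}` is integrable, then `M(γ)f` is a probability density whose moments
(separately on `[0,b]` and on `[a,0]`) are `γ/(γ+n)` times those of `f`. -/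
theorem stmt4 (a b γ : ℝ) (f : ℝ → ℝ)
    (ha : a < 0) (hb : 0 < b) (hγ : 0 < γ)
    (hf0 : ∀ x, 0 ≤ f x)
    (hsupp : ∀ x, x ∉ Set.Icc a b → f x = 0)
    (hint : IntervalIntegrable f volume a b)
    (hone : (∫ x in a..b, f x) = 1)
    (hintγ : IntervalIntegrable (fun t => f t * |t| ^ (-γ)) volume a b) :
    (∀ n : ℕ,
        (∫ x in (0:ℝ)..b, x ^ n * Mgamma γ a b f x)
          = γ / (γ + n) * ∫ x in (0:ℝ)..b, x ^ n * f x) ∧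
    (∀ n : ℕ,
        (∫ x in a..(0:ℝ), x ^ n * Mgamma γ a b f x)
          = γ / (γ + n) * ∫ x in a..(0:ℝ), x ^ n * f x) ∧
    (∀ x, 0 ≤ Mgamma γ a b f x) ∧
    ((∫ x in a..b, Mgamma γ a b f x) = 1) ∧
    (∀ n : ℕ,
        (∫ x in a..b, x ^ n * Mgamma γ a b f x)
          = γ / (γ + n) * ∫ x in a..b, x ^ n * f x) := by

  have ha0 : (0:ℝ) < -a := by linarith
  have hsub1 : Set.uIcc (0:ℝ) b ⊆ Set.uIcc a b :=
    Set.uIcc_subset_uIcc (by rw [Set.mem_uIcc]; left; exact ⟨ha.le, hb.le⟩)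
      (by rw [Set.mem_uIcc]; left; exact ⟨by linarith, le_rfl⟩)
  have hsub2 : Set.uIcc a (0:ℝ) ⊆ Set.uIcc a b :=
    Set.uIcc_subset_uIcc (by rw [Set.mem_uIcc]; left; exact ⟨le_rfl, by linarith⟩)
      (by rw [Set.mem_uIcc]; left; exact ⟨ha.le, hb.le⟩)
  have hvpos : IntegrableOn (fun t => f t * t ^ (-γ)) (Set.Ioc 0 b) := by
    have h1 : IntervalIntegrable (fun t => f t * |t| ^ (-γ)) volume 0 b := hintγ.mono_set hsub1
    rw [intervalIntegrable_iff_integrableOn_Ioc_of_le hb.le] at h1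
    refine h1.congr_fun (fun t ht => ?_) measurableSet_Ioc
    show f t * |t| ^ (-γ) = _
    rw [abs_of_pos ht.1]
  have hvneg : IntegrableOn (fun s => f (-s) * s ^ (-γ)) (Set.Ioc 0 (-a)) := by
    have h1 : IntervalIntegrable (fun t => f t * |t| ^ (-γ)) volume a 0 := hintγ.mono_set hsub2
    have h2 := ((IntervalIntegrable.iff_comp_neg).mp h1).symm
    rw [neg_zero] at h2
    rw [intervalIntegrable_iff_integrableOn_Ioc_of_le ha0.le] at h2
    refine h2.congr_fun (fun s hs => ?_) measurableSet_Ioc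
    show f (-s) * |-s| ^ (-γ) = _
    rw [abs_neg, abs_of_pos hs.1]
  -- pointwise identity on positive side
  have hMpos : ∀ n : ℕ, Set.EqOn (fun x => x ^ n * Mgamma γ a b f x)
      (fun x => x ^ n * (γ * x ^ (γ - 1) * ∫ t in Set.Ioc x b, f t * t ^ (-γ)))
      (Set.Ioc 0 b) := by
    intro n x hx
    simp only [Mgamma, if_pos hx.1, intervalIntegral.integral_of_le hx.2]
  -- pointwise identity on negative side (after reflection)
  have hMneg : ∀ n : ℕ, Set.EqOn (fun x => (-x) ^ n * Mgamma γ a b f (-x))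
      (fun x => (-1 : ℝ) ^ n *
        (x ^ n * (γ * x ^ (γ - 1) * ∫ t in Set.Ioc x (-a), f (-t) * t ^ (-γ))))
      (Set.Ioc 0 (-a)) := by
    intro n x hx
    have hx0 : ¬ (0 < -x) := by simp; linarith [hx.1]
    have hinner : (∫ t in a..(-x), f t * |t| ^ (-γ))
        = ∫ t in Set.Ioc x (-a), f (-t) * t ^ (-γ) := by
      have e := intervalIntegral.integral_comp_neg (a := x) (b := -a)
        (fun t => f t * |t| ^ (-γ))
      rw [neg_neg] at e
      rw [← e, intervalIntegral.integral_of_le hx.2]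
      refine setIntegral_congr_fun measurableSet_Ioc (fun s hs => ?_)
      simp only [abs_neg]
      rw [abs_of_pos (hx.1.trans hs.1)]
    show (-x) ^ n * Mgamma γ a b f (-x) = _
    rw [neg_pow]
    unfold Mgamma
    rw [if_neg hx0, abs_neg, abs_of_pos hx.1, hinner]
    ring
  have keypos := fun n => key b γ hb hγ n f hvpos
  have keyneg := fun n => key (-a) γ ha0 hγ n (fun s => f (-s)) hvneg
  -- positive moments
  have Apos : ∀ n : ℕ, (∫ x in (0:ℝ)..b, x ^ n * Mgamma γ a b f x)
      = γ / (γ + n) * ∫ x in (0:ℝ)..b, x ^ n * f x := by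
    intro n
    rw [intervalIntegral.integral_of_le hb.le, intervalIntegral.integral_of_le hb.le,
      setIntegral_congr_fun measurableSet_Ioc (hMpos n)]
    exact (keypos n).2
  -- negative moments
  have negflip : ∀ h : ℝ → ℝ, (∫ x in a..(0:ℝ), h x) = ∫ x in (0:ℝ)..(-a), h (-x) := by
    intro h
    have := intervalIntegral.integral_comp_neg (a := (0:ℝ)) (b := -a) h
    rw [neg_neg, neg_zero] at this
    exact this.symm
  have Aneg : ∀ n : ℕ, (∫ x in a..(0:ℝ), x ^ n * Mgamma γ a b f x)
      = γ / (γ + n) * ∫ x in a..(0:ℝ), x ^ n * f x := by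
    intro n
    rw [negflip (fun x => x ^ n * Mgamma γ a b f x),
        negflip (fun x => x ^ n * f x),
        intervalIntegral.integral_of_le ha0.le, intervalIntegral.integral_of_le ha0.le,
        setIntegral_congr_fun measurableSet_Ioc (hMneg n)]
    have : (∫ x in Set.Ioc 0 (-a), (-1:ℝ) ^ n *
        (x ^ n * (γ * x ^ (γ - 1) * ∫ t in Set.Ioc x (-a), f (-t) * t ^ (-γ))))
        = (-1:ℝ) ^ n * ∫ x in Set.Ioc 0 (-a),
          (x ^ n * (γ * x ^ (γ - 1) * ∫ t in Set.Ioc x (-a), f (-t) * t ^ (-γ))) :=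
      MeasureTheory.integral_const_mul _ _
    rw [this, (keyneg n).2]
    have : (∫ x in Set.Ioc 0 (-a), (-x) ^ n * f (-x))
        = (-1:ℝ) ^ n * ∫ x in Set.Ioc 0 (-a), x ^ n * f (-x) := by
      rw [← MeasureTheory.integral_const_mul]
      refine setIntegral_congr_fun measurableSet_Ioc (fun x hx => ?_)
      rw [neg_pow]; ring
    rw [this]
    ring
  -- interval integrability of the moment integrands of Mgamma
  have IIpos : ∀ n : ℕ, IntervalIntegrable (fun x => x ^ n * Mgamma γ a b f x) volume 0 b := by
    intro n
    rw [intervalIntegrable_iff_integrableOn_Ioc_of_le hb.le]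
    exact (keypos n).1.congr_fun (fun x hx => ((hMpos n) hx).symm) measurableSet_Ioc
  have IIneg : ∀ n : ℕ, IntervalIntegrable (fun x => x ^ n * Mgamma γ a b f x) volume a 0 := by
    intro n
    have h2 : IntegrableOn (fun x => (-x) ^ n * Mgamma γ a b f (-x)) (Set.Ioc 0 (-a)) := by
      have h2' : IntegrableOn (fun x => (-1:ℝ) ^ n *
          (x ^ n * (γ * x ^ (γ - 1) * ∫ t in Set.Ioc x (-a), f (-t) * t ^ (-γ))))
          (Set.Ioc 0 (-a)) := (keyneg n).1.const_mul _
      exact h2'.congr_fun (fun x hx => ((hMneg n) hx).symm) measurableSet_Ioc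
    rw [← intervalIntegrable_iff_integrableOn_Ioc_of_le ha0.le] at h2
    have h3 := ((IntervalIntegrable.iff_comp_neg).mpr ?_ :
      IntervalIntegrable (fun x => x ^ n * Mgamma γ a b f x) volume a 0)
    · exact h3
    · rw [neg_zero]
      have : (fun x : ℝ => (fun y => y ^ n * Mgamma γ a b f y) (-x))
          = fun x => (-x) ^ n * Mgamma γ a b f (-x) := rfl
      rw [this]
      exact h2.symm
  -- interval integrability of moment integrands of f
  have IIf : ∀ n : ℕ, IntervalIntegrable (fun x => x ^ n * f x) volume a b := by
    intro n
    exact hint.continuousOn_mul (by fun_prop)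
  -- nonnegativity
  have hM0 : ∀ x, 0 ≤ Mgamma γ a b f x := by
    intro x
    by_cases hx : 0 < x
    · rw [Mgamma, if_pos hx]
      rcases le_or_gt x b with hxb | hbx
      · have : 0 ≤ ∫ t in x..b, f t * t ^ (-γ) := by
          apply intervalIntegral.integral_nonneg hxb
          intro t ht
          exact mul_nonneg (hf0 t) (Real.rpow_nonneg (hx.le.trans ht.1) _)
        positivity
      · have : (∫ t in x..b, f t * t ^ (-γ)) = 0 := by
          rw [intervalIntegral.integral_of_ge hbx.le]
          rw [setIntegral_eq_zero_of_forall_eq_zero]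
          · ring
          · intro t ht
            rw [hsupp t (by intro h; exact absurd h.2 (not_le.mpr ht.1)), zero_mul]
        rw [this, mul_zero]
    · rw [Mgamma, if_neg hx]
      rcases le_or_gt a x with hax | hxa
      · have : 0 ≤ ∫ t in a..x, f t * |t| ^ (-γ) := by
          apply intervalIntegral.integral_nonneg hax
          intro t _
          exact mul_nonneg (hf0 t) (Real.rpow_nonneg (abs_nonneg t) _)
        positivity
      · have : (∫ t in a..x, f t * |t| ^ (-γ)) = 0 := by
          rw [intervalIntegral.integral_of_ge hxa.le]
          have hae : ∀ᵐ t : ℝ, t ≠ a := by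
            simp only [ae_iff, not_not, Set.setOf_eq_eq_singleton, measure_singleton]
          rw [setIntegral_eq_zero_of_ae_eq_zero]
          · ring
          · filter_upwards [hae] with t hta ht
            rw [hsupp t, zero_mul]
            intro hmem
            exact hta (le_antisymm ht.2 hmem.1)
        rw [this, mul_zero]
  -- splitting a..b
  have split : ∀ n : ℕ, (∫ x in a..b, x ^ n * Mgamma γ a b f x)
      = γ / (γ + n) * ∫ x in a..b, x ^ n * f x := by
    intro n
    rw [← intervalIntegral.integral_add_adjacent_intervals (IIneg n) (IIpos n),
        ← intervalIntegral.integral_add_adjacent_intervals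
          ((IIf n).mono_set hsub2) ((IIf n).mono_set hsub1),
        Aneg n, Apos n]
    ring
  refine ⟨Apos, Aneg, hM0, ?_, split⟩
  -- total mass
  have h0 := split 0
  simp only [pow_zero, one_mul, Nat.cast_zero, add_zero, div_self hγ.ne'] at h0
  rw [h0, hone]
end

section
/- Let $f$ and $g$ be probability densities supported on a common bounded interval $[a,b]$ with $a<0<b$, and suppose there exist $\gamma_1,\gamma_2>0$ and $\delta\in(0,1)$ such that for all nonnegative integers $n$, $\frac{\gamma_1}{\gamma_1+n}\mu_n[g]=\frac{\gamma_2+\delta n}{\gamma_2+n}\mu_n[f]$, where $\mu_n[h]=\int_a^b x^n h(x)dx$. Then $\int_0^b g(x)\,dx = \int_0^b f(x)\,dx$, i.e., random variables with densities $f$ and $g$ have the same probability of being positive. -/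
open MeasureTheory intervalIntegral
open scoped ENNReal NNReal

noncomputable def stmt19K (γ : ℝ) : ℝ → ℝ :=
  (Set.Ioc (0:ℝ) 1).indicator fun u => γ * u ^ (γ - 1)

lemma stmt19K_nonneg {γ : ℝ} (hγ : 0 < γ) (u : ℝ) : 0 ≤ stmt19K γ u := by
  unfold stmt19K
  by_cases h : u ∈ Set.Ioc (0:ℝ) 1
  · rw [Set.indicator_of_mem h]
    exact mul_nonneg hγ.le (Real.rpow_nonneg h.1.le _)
  · rw [Set.indicator_of_notMem h]

lemma stmt19K_zero {γ : ℝ} {u : ℝ} (h : u ∉ Set.Ioc (0:ℝ) 1) : stmt19K γ u = 0 :=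
  Set.indicator_of_notMem h _

lemma stmt19K_meas (γ : ℝ) : Measurable (stmt19K γ) := by
  have he : stmt19K γ
      = (Set.Ioc (0:ℝ) 1).indicator fun u => γ * Real.exp (Real.log u * (γ - 1)) := by
    funext u
    unfold stmt19K
    by_cases h : u ∈ Set.Ioc (0:ℝ) 1
    · rw [Set.indicator_of_mem h, Set.indicator_of_mem h, Real.rpow_def_of_pos h.1]
    · rw [Set.indicator_of_notMem h, Set.indicator_of_notMem h]
  rw [he]
  exact (measurable_const.mul (Real.measurable_exp.comp
    (Real.measurable_log.mul_const _))).indicator measurableSet_Ioc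

lemma stmt19K_integrable {γ : ℝ} (hγ : 0 < γ) : Integrable (stmt19K γ) volume := by
  unfold stmt19K
  rw [integrable_indicator_iff measurableSet_Ioc]
  have h : IntervalIntegrable (fun u : ℝ => γ * u ^ (γ - 1)) volume 0 1 :=
    (intervalIntegral.intervalIntegrable_rpow' (by linarith)).const_mul γ
  exact h.1

lemma stmt19K_moment {γ : ℝ} (hγ : 0 < γ) (n : ℕ) :
    ∫ u, stmt19K γ u * u ^ n = γ / (γ + n) := by
  have hn : (0:ℝ) ≤ n := Nat.cast_nonneg n
  have key : (fun u => stmt19K γ u * u ^ n)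
      = (Set.Ioc (0:ℝ) 1).indicator ((fun u => γ * u ^ (γ - 1 + n)) : ℝ → ℝ) := by
    funext u
    unfold stmt19K
    by_cases h : u ∈ Set.Ioc (0:ℝ) 1
    · rw [Set.indicator_of_mem h, Set.indicator_of_mem h,
        ← Real.rpow_natCast u n, mul_assoc, ← Real.rpow_add h.1]
    · rw [Set.indicator_of_notMem h, Set.indicator_of_notMem h, zero_mul]
  rw [key, MeasureTheory.integral_indicator measurableSet_Ioc,
    ← intervalIntegral.integral_of_le (by norm_num : (0:ℝ) ≤ 1),
    intervalIntegral.integral_const_mul, integral_rpow (Or.inl (by linarith))]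
  rw [Real.one_rpow, Real.zero_rpow (by intro h; linarith)]
  have h2 : γ - 1 + (n:ℝ) + 1 = γ + n := by ring
  rw [h2, sub_zero, mul_one_div]

lemma stmt19_int_density {h : ℝ → ℝ} (hm : AEMeasurable h volume) (h0 : ∀ x, 0 ≤ h x)
    (φ : ℝ → ℝ) :
    ∫ x, φ x ∂(volume.withDensity fun x => ENNReal.ofReal (h x))
      = ∫ x, h x * φ x := by
  have hm' : AEMeasurable (fun x => (h x).toNNReal) volume :=
    measurable_real_toNNReal.comp_aemeasurable hm
  have hd : (fun x => ENNReal.ofReal (h x)) = fun x => ((h x).toNNReal : ℝ≥0∞) := rfl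
  rw [hd, integral_withDensity_eq_integral_smul₀ hm']
  congr 1
  funext x
  rw [NNReal.smul_def, Real.coe_toNNReal _ (h0 x), smul_eq_mul]

lemma stmt19_aesm {a b : ℝ} (hab : a < b) {h : ℝ → ℝ}
    (hsupp : ∀ x, x ∉ Set.Icc a b → h x = 0)
    (hint : IntervalIntegrable h volume a b) :
    AEMeasurable h volume ∧ Integrable h volume := by
  have h1 : IntegrableOn h (Set.Ioc a b) volume := hint.1
  have h2 : Integrable ((Set.Ioc a b).indicator h) volume :=
    (integrable_indicator_iff measurableSet_Ioc).2 h1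
  have h3 : (Set.Ioc a b).indicator h =ᵐ[volume] h := by
    have hsing : ∀ᵐ x ∂(volume : Measure ℝ), x ≠ a := by
      rw [ae_iff]
      have : {x : ℝ | ¬x ≠ a} = {a} := by ext x; simp
      rw [this]
      exact measure_singleton a
    filter_upwards [hsing] with x hx
    by_cases hm : x ∈ Set.Ioc a b
    · rw [Set.indicator_of_mem hm]
    · rw [Set.indicator_of_notMem hm]
      rcases le_or_gt x a with h' | h'
      · exact (hsupp x (fun hc => (hx (le_antisymm h' hc.1)).elim)).symm
      · have : x ∉ Set.Icc a b := fun hc => hm ⟨h', hc.2⟩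
        exact (hsupp x this).symm
  exact ⟨(h2.aestronglyMeasurable.congr h3).aemeasurable, h2.congr h3⟩

lemma stmt19_mul_mem {a b x u : ℝ} (ha : a < 0) (hb : 0 < b)
    (hx : x ∈ Set.Icc a b) (hu : u ∈ Set.Ioc (0:ℝ) 1) : x * u ∈ Set.Icc a b := by
  obtain ⟨hx1, hx2⟩ := hx
  obtain ⟨hu1, hu2⟩ := hu
  constructor
  · rcases le_or_gt 0 x with h | h
    · nlinarith
    · nlinarith
  · rcases le_or_gt 0 x with h | h
    · nlinarith
    · nlinarith

noncomputable def stmt19φ (k : ℕ) (x : ℝ) : ℝ := max 0 (min 1 ((k : ℝ) * x))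

noncomputable def stmt19ind : ℝ → ℝ := (Set.Ioi (0:ℝ)).indicator fun _ => 1

lemma stmt19φ_cont (k : ℕ) : Continuous (stmt19φ k) :=
  continuous_const.max (continuous_const.min (continuous_const.mul continuous_id))

lemma stmt19φ_bdd (k : ℕ) (x : ℝ) : ‖stmt19φ k x‖ ≤ 1 := by
  rw [Real.norm_eq_abs, abs_of_nonneg (le_max_left _ _)]
  exact max_le zero_le_one (min_le_left _ _)

lemma stmt19ind_meas : Measurable stmt19ind :=
  measurable_const.indicator measurableSet_Ioi

lemma stmt19ind_bdd (x : ℝ) : ‖stmt19ind x‖ ≤ 1 := by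
  unfold stmt19ind
  by_cases h : x ∈ Set.Ioi (0:ℝ)
  · rw [Set.indicator_of_mem h]; simp
  · rw [Set.indicator_of_notMem h]; simp

lemma stmt19_tendsto (ρ : Measure ℝ) [IsFiniteMeasure ρ] :
    Filter.Tendsto (fun k : ℕ => ∫ x, stmt19φ k x ∂ρ) Filter.atTop
      (nhds (∫ x, stmt19ind x ∂ρ)) := by
  apply tendsto_integral_of_dominated_convergence (bound := fun _ => (1:ℝ))
  · exact fun k => (stmt19φ_cont k).aestronglyMeasurable
  · exact integrable_const 1
  · exact fun k => Filter.Eventually.of_forall (stmt19φ_bdd k)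
  · apply Filter.Eventually.of_forall
    intro x
    rcases le_or_gt x 0 with h | h
    · have hval : ∀ k : ℕ, stmt19φ k x = 0 := by
        intro k
        unfold stmt19φ
        have : (k:ℝ) * x ≤ 0 := mul_nonpos_of_nonneg_of_nonpos (Nat.cast_nonneg k) h
        rw [max_eq_left]
        exact le_trans (min_le_right _ _) this
      have hind : stmt19ind x = 0 := Set.indicator_of_notMem (by simpa using h) _
      rw [hind]
      simp only [hval]
      exact tendsto_const_nhds
    · have hind : stmt19ind x = 1 := Set.indicator_of_mem (by simpa using h) _
      rw [hind]
      apply tendsto_atTop_of_eventually_const (i₀ := ⌈1/x⌉₊)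
      intro k hk
      unfold stmt19φ
      have h1 : 1/x ≤ (k:ℝ) := le_trans (Nat.le_ceil _) (by exact_mod_cast hk)
      have h2 : (1:ℝ) ≤ (k:ℝ) * x := by
        rw [div_le_iff₀ h] at h1
        linarith
      rw [min_eq_left h2, max_eq_right zero_le_one]

lemma stmt19_integrable_of_cont {a b : ℝ} {ρ : Measure ℝ} [IsFiniteMeasure ρ]
    (hρ : ∀ᵐ x ∂ρ, x ∈ Set.Icc a b) {ψ : ℝ → ℝ} (hψ : Continuous ψ) :
    Integrable ψ ρ := by
  obtain ⟨C, hC⟩ := (isCompact_Icc : IsCompact (Set.Icc a b)).exists_bound_of_continuousOn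
    hψ.continuousOn
  exact (integrable_const C).mono' hψ.aestronglyMeasurable (hρ.mono fun x hx => hC x hx)

lemma stmt19_poly_to_cont {a b : ℝ} {ρ₁ ρ₂ : Measure ℝ}
    [IsFiniteMeasure ρ₁] [IsFiniteMeasure ρ₂]
    (h₁ : ∀ᵐ x ∂ρ₁, x ∈ Set.Icc a b) (h₂ : ∀ᵐ x ∂ρ₂, x ∈ Set.Icc a b)
    (hpoly : ∀ n : ℕ, ∫ x, x ^ n ∂ρ₁ = ∫ x, x ^ n ∂ρ₂)
    {φ : ℝ → ℝ} (hφ : Continuous φ) :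
    ∫ x, φ x ∂ρ₁ = ∫ x, φ x ∂ρ₂ := by
  set d := (∫ x, φ x ∂ρ₁) - ∫ x, φ x ∂ρ₂ with hd
  set M := (ρ₁ Set.univ).toReal + (ρ₂ Set.univ).toReal with hM
  have hM0 : 0 ≤ M := by positivity
  have key : ∀ ε : ℝ, 0 < ε → |d| ≤ ε * M := by
    intro ε hε
    obtain ⟨p, hp⟩ := exists_polynomial_near_of_continuousOn a b φ hφ.continuousOn ε hε
    have hpc : Continuous fun x => p.eval x := p.continuous
    have hpeq : ∫ x, p.eval x ∂ρ₁ = ∫ x, p.eval x ∂ρ₂ := by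
      simp_rw [Polynomial.eval_eq_sum_range]
      rw [integral_finset_sum _ (fun i _ =>
          (stmt19_integrable_of_cont h₁ (continuous_pow i)).const_mul _),
        integral_finset_sum _ (fun i _ =>
          (stmt19_integrable_of_cont h₂ (continuous_pow i)).const_mul _)]
      refine Finset.sum_congr rfl fun i _ => ?_
      rw [MeasureTheory.integral_const_mul, MeasureTheory.integral_const_mul, hpoly i]
    have hi1 : Integrable φ ρ₁ := stmt19_integrable_of_cont h₁ hφ
    have hi2 : Integrable φ ρ₂ := stmt19_integrable_of_cont h₂ hφ
    have hip1 : Integrable (fun x => p.eval x) ρ₁ := stmt19_integrable_of_cont h₁ hpc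
    have hip2 : Integrable (fun x => p.eval x) ρ₂ := stmt19_integrable_of_cont h₂ hpc
    have e1 : ‖∫ x, (φ x - p.eval x) ∂ρ₁‖ ≤ ε * (ρ₁ Set.univ).toReal := by
      apply MeasureTheory.norm_integral_le_of_norm_le_const
      filter_upwards [h₁] with x hx
      rw [Real.norm_eq_abs, abs_sub_comm]
      exact (hp x hx).le
    have e2 : ‖∫ x, (φ x - p.eval x) ∂ρ₂‖ ≤ ε * (ρ₂ Set.univ).toReal := by
      apply MeasureTheory.norm_integral_le_of_norm_le_const
      filter_upwards [h₂] with x hx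
      rw [Real.norm_eq_abs, abs_sub_comm]
      exact (hp x hx).le
    rw [integral_sub hi1 hip1] at e1
    rw [integral_sub hi2 hip2] at e2
    rw [Real.norm_eq_abs] at e1 e2
    have : d = ((∫ x, φ x ∂ρ₁) - ∫ x, p.eval x ∂ρ₁)
        - ((∫ x, φ x ∂ρ₂) - ∫ x, p.eval x ∂ρ₂) := by
      rw [hd, hpeq]; ring
    rw [this]
    calc |((∫ x, φ x ∂ρ₁) - ∫ x, p.eval x ∂ρ₁) - ((∫ x, φ x ∂ρ₂) - ∫ x, p.eval x ∂ρ₂)|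
        ≤ |(∫ x, φ x ∂ρ₁) - ∫ x, p.eval x ∂ρ₁| + |(∫ x, φ x ∂ρ₂) - ∫ x, p.eval x ∂ρ₂| :=
          abs_sub _ _
      _ ≤ ε * (ρ₁ Set.univ).toReal + ε * (ρ₂ Set.univ).toReal := add_le_add e1 e2
      _ = ε * M := by rw [hM]; ring
  have habs : |d| ≤ 0 := by
    by_contra hlt
    push_neg at hlt
    have h2 := key (|d| / (M + 1)) (by positivity)
    rw [div_mul_eq_mul_div] at h2
    have h3 : |d| * M / (M + 1) < |d| := by
      rw [div_lt_iff₀ (by linarith)]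
      nlinarith
    linarith
  have : d = 0 := abs_eq_zero.1 (le_antisymm habs (abs_nonneg d))
  rw [hd] at this
  linarith

/-- main -/
theorem stmt19 (a b γ₁ γ₂ δ : ℝ) (f g : ℝ → ℝ)
    (ha : a < 0) (hb : 0 < b)
    (hγ₁ : 0 < γ₁) (hγ₂ : 0 < γ₂) (hδ : 0 < δ) (hδ1 : δ < 1)
    (hf0 : ∀ x, 0 ≤ f x) (hg0 : ∀ x, 0 ≤ g x)
    (hfsupp : ∀ x, x ∉ Set.Icc a b → f x = 0)
    (hgsupp : ∀ x, x ∉ Set.Icc a b → g x = 0)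
    (hfint : IntervalIntegrable f volume a b)
    (hgint : IntervalIntegrable g volume a b)
    (hfone : (∫ x in a..b, f x) = 1)
    (hgone : (∫ x in a..b, g x) = 1)
    (hmom : ∀ n : ℕ,
      γ₁ / (γ₁ + n) * ∫ x in a..b, x ^ n * g x
        = (γ₂ + δ * n) / (γ₂ + n) * ∫ x in a..b, x ^ n * f x) :
    (∫ x in (0:ℝ)..b, g x) = ∫ x in (0:ℝ)..b, f x := by
  have hab : a ≤ b := by linarith
  obtain ⟨hgae, hgInt⟩ := stmt19_aesm (show a < b by linarith) hgsupp hgint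
  obtain ⟨hfae, hfInt⟩ := stmt19_aesm (show a < b by linarith) hfsupp hfint
  set μ : Measure ℝ := volume.withDensity fun x => ENNReal.ofReal (f x) with hμdef
  set ν : Measure ℝ := volume.withDensity fun x => ENNReal.ofReal (g x) with hνdef
  set κ₁ : Measure ℝ := volume.withDensity fun u => ENNReal.ofReal (stmt19K γ₁ u) with hκ₁def
  set κ₂ : Measure ℝ := volume.withDensity fun u => ENNReal.ofReal (stmt19K γ₂ u) with hκ₂def
  haveI : IsFiniteMeasure μ := isFiniteMeasure_withDensity_ofReal hfInt.2
  haveI : IsFiniteMeasure ν := isFiniteMeasure_withDensity_ofReal hgInt.2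
  haveI : IsFiniteMeasure κ₁ := isFiniteMeasure_withDensity_ofReal (stmt19K_integrable hγ₁).2
  haveI : IsFiniteMeasure κ₂ := isFiniteMeasure_withDensity_ofReal (stmt19K_integrable hγ₂).2
  -- support of density measures
  have hsuppD : ∀ (s : Set ℝ), MeasurableSet s → ∀ (h : ℝ → ℝ), (∀ x, x ∉ s → h x = 0) →
      ∀ᵐ x ∂(volume.withDensity fun x => ENNReal.ofReal (h x)), x ∈ s := by
    intro s hsm h hs
    rw [ae_iff]
    have hc : {x : ℝ | ¬x ∈ s} = sᶜ := rfl
    rw [hc, withDensity_apply _ hsm.compl]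
    have h0 : ∀ᵐ x ∂(volume.restrict sᶜ), ENNReal.ofReal (h x) = 0 :=
      (ae_restrict_iff' hsm.compl).2
        (Filter.Eventually.of_forall fun x hx => by rw [hs x hx, ENNReal.ofReal_zero])
    rw [lintegral_congr_ae h0, lintegral_zero]
  have hμsupp : ∀ᵐ x ∂μ, x ∈ Set.Icc a b := hsuppD _ measurableSet_Icc f hfsupp
  have hνsupp : ∀ᵐ x ∂ν, x ∈ Set.Icc a b := hsuppD _ measurableSet_Icc g hgsupp
  have hκ₁supp : ∀ᵐ u ∂κ₁, u ∈ Set.Ioc (0:ℝ) 1 :=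
    hsuppD _ measurableSet_Ioc _ (fun u hu => stmt19K_zero hu)
  have hκ₂supp : ∀ᵐ u ∂κ₂, u ∈ Set.Ioc (0:ℝ) 1 :=
    hsuppD _ measurableSet_Ioc _ (fun u hu => stmt19K_zero hu)
  -- moments
  have momf : ∀ n : ℕ, (∫ x, x ^ n ∂μ) = ∫ x in a..b, x ^ n * f x := by
    intro n
    rw [hμdef, stmt19_int_density hfae hf0]
    rw [show (∫ x, f x * x ^ n) = ∫ x in Set.Icc a b, f x * x ^ n from
      (setIntegral_eq_integral_of_forall_compl_eq_zero fun x hx => by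
        rw [hfsupp x hx, zero_mul]).symm]
    rw [MeasureTheory.integral_Icc_eq_integral_Ioc, ← intervalIntegral.integral_of_le hab]
    exact intervalIntegral.integral_congr fun x _ => mul_comm _ _
  have momg : ∀ n : ℕ, (∫ x, x ^ n ∂ν) = ∫ x in a..b, x ^ n * g x := by
    intro n
    rw [hνdef, stmt19_int_density hgae hg0]
    rw [show (∫ x, g x * x ^ n) = ∫ x in Set.Icc a b, g x * x ^ n from
      (setIntegral_eq_integral_of_forall_compl_eq_zero fun x hx => by
        rw [hgsupp x hx, zero_mul]).symm]
    rw [MeasureTheory.integral_Icc_eq_integral_Ioc, ← intervalIntegral.integral_of_le hab]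
    exact intervalIntegral.integral_congr fun x _ => mul_comm _ _
  have momk : ∀ (γ : ℝ), 0 < γ → ∀ n : ℕ,
      (∫ u, u ^ n ∂(volume.withDensity fun u => ENNReal.ofReal (stmt19K γ u))) = γ / (γ + n) := by
    intro γ hγ n
    rw [stmt19_int_density (stmt19K_meas γ).aemeasurable (stmt19K_nonneg hγ)]
    exact stmt19K_moment hγ n
  -- the multiplication map and image measures
  set m : ℝ × ℝ → ℝ := fun p => p.1 * p.2 with hmdef
  have hmmeas : Measurable m := measurable_fst.mul measurable_snd
  set ρ₁ : Measure ℝ := (ν.prod κ₁).map m with hρ₁def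
  set ρ₂' : Measure ℝ := (μ.prod κ₂).map m with hρ₂'def
  set ρ₂ : Measure ℝ := ENNReal.ofReal δ • μ + ENNReal.ofReal (1-δ) • ρ₂' with hρ₂def
  haveI : IsFiniteMeasure ρ₂ := by
    constructor
    rw [hρ₂def, Measure.add_apply, Measure.smul_apply, Measure.smul_apply,
      smul_eq_mul, smul_eq_mul]
    exact ENNReal.add_lt_top.2
      ⟨ENNReal.mul_lt_top ENNReal.ofReal_lt_top (measure_lt_top _ _),
       ENNReal.mul_lt_top ENNReal.ofReal_lt_top (measure_lt_top _ _)⟩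
  -- product support
  have hprod_supp : ∀ (ρ κ' : Measure ℝ) [IsFiniteMeasure ρ] [IsFiniteMeasure κ'],
      (∀ᵐ x ∂ρ, x ∈ Set.Icc a b) → (∀ᵐ u ∂κ', u ∈ Set.Ioc (0:ℝ) 1) →
      ∀ᵐ p ∂(ρ.prod κ'), p.1 ∈ Set.Icc a b ∧ p.2 ∈ Set.Ioc (0:ℝ) 1 := by
    intro ρ κ' _ _ hρ hκ
    rw [ae_iff] at hρ hκ ⊢
    have hset : {p : ℝ × ℝ | ¬(p.1 ∈ Set.Icc a b ∧ p.2 ∈ Set.Ioc (0:ℝ) 1)}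
        = (Set.Icc a b ×ˢ Set.Ioc (0:ℝ) 1)ᶜ := by
      ext p; simp [Set.mem_prod]
    rw [hset, Set.compl_prod_eq_union]
    apply measure_union_null
    · rw [Measure.prod_prod]
      have : ρ (Set.Icc a b)ᶜ = 0 := hρ
      rw [this, zero_mul]
    · rw [Measure.prod_prod]
      have : κ' (Set.Ioc (0:ℝ) 1)ᶜ = 0 := hκ
      rw [this, mul_zero]
  have hρ₁supp : ∀ᵐ x ∂ρ₁, x ∈ Set.Icc a b := by
    have hmem : ∀ᵐ p ∂(ν.prod κ₁), m p ∈ Set.Icc a b := by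
      filter_upwards [hprod_supp ν κ₁ hνsupp hκ₁supp] with p hp
      exact stmt19_mul_mem ha hb hp.1 hp.2
    exact (ae_map_iff hmmeas.aemeasurable measurableSet_Icc).2 hmem
  have hρ₂'supp : ∀ᵐ x ∂ρ₂', x ∈ Set.Icc a b := by
    have hmem : ∀ᵐ p ∂(μ.prod κ₂), m p ∈ Set.Icc a b := by
      filter_upwards [hprod_supp μ κ₂ hμsupp hκ₂supp] with p hp
      exact stmt19_mul_mem ha hb hp.1 hp.2
    exact (ae_map_iff hmmeas.aemeasurable measurableSet_Icc).2 hmem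
  have hρ₂supp : ∀ᵐ x ∂ρ₂, x ∈ Set.Icc a b := by
    rw [hρ₂def]
    rw [ae_add_measure_iff]
    exact ⟨Measure.ae_smul_measure hμsupp _, Measure.ae_smul_measure hρ₂'supp _⟩
  -- moment equality between ρ₁ and ρ₂
  have hmomρ : ∀ n : ℕ, ∫ x, x ^ n ∂ρ₁ = ∫ x, x ^ n ∂ρ₂ := by
    intro n
    have hden1 : (0:ℝ) < γ₁ + n := by positivity
    have hden2 : (0:ℝ) < γ₂ + n := by positivity
    have hl : ∫ x, x ^ n ∂ρ₁ = (∫ x, x ^ n ∂ν) * ∫ u, u ^ n ∂κ₁ := by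
      rw [hρ₁def, integral_map hmmeas.aemeasurable (continuous_pow n).aestronglyMeasurable]
      have : (fun p : ℝ × ℝ => (m p) ^ n) = fun p : ℝ × ℝ => p.1 ^ n * p.2 ^ n := by
        funext p; rw [hmdef]; exact mul_pow _ _ _
      rw [this]
      exact integral_prod_mul (fun x => x ^ n) (fun u => u ^ n)
    have hr : ∫ x, x ^ n ∂ρ₂' = (∫ x, x ^ n ∂μ) * ∫ u, u ^ n ∂κ₂ := by
      rw [hρ₂'def, integral_map hmmeas.aemeasurable (continuous_pow n).aestronglyMeasurable]
      have : (fun p : ℝ × ℝ => (m p) ^ n) = fun p : ℝ × ℝ => p.1 ^ n * p.2 ^ n := by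
        funext p; rw [hmdef]; exact mul_pow _ _ _
      rw [this]
      exact integral_prod_mul (fun x => x ^ n) (fun u => u ^ n)
    have hint2' : Integrable (fun x : ℝ => x ^ n) ρ₂' :=
      stmt19_integrable_of_cont hρ₂'supp (continuous_pow n)
    have hintμ : Integrable (fun x : ℝ => x ^ n) μ :=
      stmt19_integrable_of_cont hμsupp (continuous_pow n)
    have hsum : ∫ x, x ^ n ∂ρ₂ = δ * (∫ x, x ^ n ∂μ) + (1 - δ) * ∫ x, x ^ n ∂ρ₂' := by
      rw [hρ₂def, integral_add_measure
        (hintμ.smul_measure ENNReal.ofReal_ne_top)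
        (hint2'.smul_measure ENNReal.ofReal_ne_top),
        MeasureTheory.integral_smul_measure, MeasureTheory.integral_smul_measure,
        ENNReal.toReal_ofReal hδ.le, ENNReal.toReal_ofReal (by linarith : (0:ℝ) ≤ 1 - δ)]
      simp [smul_eq_mul]
    rw [hl, hsum, hr, momg n, momf n, momk γ₁ hγ₁ n, momk γ₂ hγ₂ n]
    calc (∫ x in a..b, x ^ n * g x) * (γ₁ / (γ₁ + n))
        = γ₁ / (γ₁ + n) * ∫ x in a..b, x ^ n * g x := mul_comm _ _
      _ = (γ₂ + δ * n) / (γ₂ + n) * ∫ x in a..b, x ^ n * f x := hmom n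
      _ = δ * (∫ x in a..b, x ^ n * f x)
          + (1 - δ) * ((∫ x in a..b, x ^ n * f x) * (γ₂ / (γ₂ + n))) := by
          field_simp
          ring
  -- equality of integrals of the cutoff functions, and pass to the limit
  have hcont : ∀ k : ℕ, ∫ x, stmt19φ k x ∂ρ₁ = ∫ x, stmt19φ k x ∂ρ₂ :=
    fun k => stmt19_poly_to_cont hρ₁supp hρ₂supp hmomρ (stmt19φ_cont k)
  have hindeq : ∫ x, stmt19ind x ∂ρ₁ = ∫ x, stmt19ind x ∂ρ₂ :=
    tendsto_nhds_unique ((stmt19_tendsto ρ₁).congr hcont) (stmt19_tendsto ρ₂)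
  -- κ-integral of the indicator is 1
  have hκind : ∀ (γ : ℝ), 0 < γ →
      (∫ u, stmt19ind u ∂(volume.withDensity fun u => ENNReal.ofReal (stmt19K γ u))) = 1 := by
    intro γ hγ
    rw [stmt19_int_density (stmt19K_meas γ).aemeasurable (stmt19K_nonneg hγ)]
    have he : (fun u => stmt19K γ u * stmt19ind u) = fun u => stmt19K γ u * u ^ 0 := by
      funext u
      by_cases hu : u ∈ Set.Ioc (0:ℝ) 1
      · rw [pow_zero]
        unfold stmt19ind
        rw [Set.indicator_of_mem (by exact hu.1 : u ∈ Set.Ioi (0:ℝ))]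
      · rw [stmt19K_zero hu, zero_mul, zero_mul]
    rw [he, stmt19K_moment hγ 0, Nat.cast_zero, add_zero, div_self hγ.ne']
  -- unpacking the indicator integral over a mapped product measure
  have hun : ∀ (ρ κ' : Measure ℝ) [IsFiniteMeasure ρ] [IsFiniteMeasure κ'],
      (∀ᵐ x ∂ρ, x ∈ Set.Icc a b) → (∀ᵐ u ∂κ', u ∈ Set.Ioc (0:ℝ) 1) →
      (∫ u, stmt19ind u ∂κ') = 1 →
      (∫ x, stmt19ind x ∂((ρ.prod κ').map m)) = ∫ x, stmt19ind x ∂ρ := by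
    intro ρ κ' _ _ hρ hκ hκ1
    rw [integral_map hmmeas.aemeasurable stmt19ind_meas.aestronglyMeasurable]
    have hcongr : (fun p : ℝ × ℝ => stmt19ind (m p))
        =ᵐ[ρ.prod κ'] fun p : ℝ × ℝ => stmt19ind p.1 * stmt19ind p.2 := by
      filter_upwards [hprod_supp ρ κ' hρ hκ] with p hp
      have hu : 0 < p.2 := hp.2.1
      rw [hmdef]
      unfold stmt19ind
      by_cases hx : p.1 ∈ Set.Ioi (0:ℝ)
      · rw [Set.indicator_of_mem hx, Set.indicator_of_mem (by exact hu : p.2 ∈ Set.Ioi (0:ℝ)),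
          Set.indicator_of_mem (by exact mul_pos hx hu : p.1 * p.2 ∈ Set.Ioi (0:ℝ)), mul_one]
      · have hx0 : p.1 ≤ 0 := not_lt.1 (by simpa using hx)
        rw [Set.indicator_of_notMem hx,
          Set.indicator_of_notMem
            (by simpa using mul_nonpos_of_nonpos_of_nonneg hx0 hu.le : p.1 * p.2 ∉ Set.Ioi (0:ℝ)),
          zero_mul]
    rw [integral_congr_ae hcongr, integral_prod_mul stmt19ind stmt19ind, hκ1, mul_one]
  have hρ₁ind : ∫ x, stmt19ind x ∂ρ₁ = ∫ x, stmt19ind x ∂ν :=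
    hun ν κ₁ hνsupp hκ₁supp (hκind γ₁ hγ₁)
  have hρ₂'ind : ∫ x, stmt19ind x ∂ρ₂' = ∫ x, stmt19ind x ∂μ :=
    hun μ κ₂ hμsupp hκ₂supp (hκind γ₂ hγ₂)
  have hindint : ∀ (ρ : Measure ℝ) [IsFiniteMeasure ρ], Integrable stmt19ind ρ := by
    intro ρ _
    exact (integrable_const 1).mono' stmt19ind_meas.aestronglyMeasurable
      (Filter.Eventually.of_forall stmt19ind_bdd)
  have hρ₂ind : ∫ x, stmt19ind x ∂ρ₂ = ∫ x, stmt19ind x ∂μ := by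
    rw [hρ₂def, integral_add_measure
      ((hindint μ).smul_measure ENNReal.ofReal_ne_top)
      ((hindint ρ₂').smul_measure ENNReal.ofReal_ne_top),
      MeasureTheory.integral_smul_measure, MeasureTheory.integral_smul_measure, hρ₂'ind,
      ENNReal.toReal_ofReal hδ.le, ENNReal.toReal_ofReal (by linarith : (0:ℝ) ≤ 1 - δ)]
    simp only [smul_eq_mul]
    ring
  -- final unpacking
  have hfin : ∀ (h : ℝ → ℝ), AEMeasurable h volume → (∀ x, 0 ≤ h x) →
      (∀ x, x ∉ Set.Icc a b → h x = 0) →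
      (∫ x, stmt19ind x ∂(volume.withDensity fun x => ENNReal.ofReal (h x)))
        = ∫ x in (0:ℝ)..b, h x := by
    intro h hae h0 hs
    rw [stmt19_int_density hae h0]
    have he : (fun x => h x * stmt19ind x) = (Set.Ioc (0:ℝ) b).indicator h := by
      funext x
      by_cases hx : x ∈ Set.Ioc (0:ℝ) b
      · rw [Set.indicator_of_mem hx]
        unfold stmt19ind
        rw [Set.indicator_of_mem (by exact hx.1 : x ∈ Set.Ioi (0:ℝ)), mul_one]
      · rw [Set.indicator_of_notMem hx]
        rcases le_or_gt x 0 with h' | h'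
        · unfold stmt19ind
          rw [Set.indicator_of_notMem (by simpa using h'), mul_zero]
        · have hxb : b < x := by
            by_contra hbb
            push_neg at hbb
            exact hx ⟨h', hbb⟩
          rw [hs x (fun hc => absurd hc.2 (not_le.2 hxb)), zero_mul]
    rw [he, MeasureTheory.integral_indicator measurableSet_Ioc,
      ← intervalIntegral.integral_of_le hb.le]
  calc (∫ x in (0:ℝ)..b, g x)
      = ∫ x, stmt19ind x ∂ν := (hfin g hgae hg0 hgsupp).symm
    _ = ∫ x, stmt19ind x ∂ρ₁ := hρ₁ind.symm
    _ = ∫ x, stmt19ind x ∂ρ₂ := hindeq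
    _ = ∫ x, stmt19ind x ∂μ := hρ₂ind
    _ = ∫ x in (0:ℝ)..b, f x := hfin f hfae hf0 hfsupp
end
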